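/- For every integer k ≥ 1, the series σ_k := Σ_{n=1}^∞ |G_n|/(n+k) satisfies σ_k = 1/k + Σ_{m=1}^k (-1)^m · C(k,m) · ln(m+1). -/

import Mathlib

open Real Finset MeasureTheory
open scoped ENNReal NNReal


noncomputable def bin (x : ℝ) (n : ℕ) : ℝ := (∏ j ∈ Finset.range n, (x - j)) / n.factorial

lemma bin_zero (x : ℝ) : bin x 0 = 1 := by simp [bin]

lemma bin_succ (x : ℝ) (n : ℕ) : bin x (n+1) = bin x n * ((x - n) / (n+1)) := by
  rw [bin, bin, Finset.prod_range_succ]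
  have h : (((n+1).factorial : ℕ) : ℝ) = (n.factorial : ℝ) * ((n:ℝ)+1) := by
    rw [Nat.factorial_succ]; push_cast; ring
  rw [h, mul_div_mul_comm]

lemma bin_sign {x : ℝ} (hx : x ∈ Set.Icc (0:ℝ) 1) (n : ℕ) :
    0 ≤ (-1 : ℝ)^n * bin x (n+1) := by
  obtain ⟨hx0, hx1⟩ := hx
  induction n with
  | zero => simpa [bin_succ, bin_zero] using hx0
  | succ n ih =>
      have h1 : bin x (n+1+1) = bin x (n+1) * ((x - (n+1)) / (n+2)) := by
        rw [bin_succ]; push_cast; ring_nf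
      calc (0:ℝ) ≤ ((-1:ℝ)^n * bin x (n+1)) * (((n:ℝ)+1 - x) / (n+2)) :=
            mul_nonneg ih (div_nonneg (by linarith) (by positivity))
        _ = (-1:ℝ)^(n+1) * bin x (n+1+1) := by rw [h1]; ring

lemma bin_abs_le {x : ℝ} (hx : x ∈ Set.Icc (0:ℝ) 1) (n : ℕ) :
    |bin x (n+1)| ≤ 1 / (n+1) := by
  obtain ⟨hx0, hx1⟩ := hx
  induction n with
  | zero =>
      have : bin x 1 = x := by rw [bin_succ, bin_zero]; push_cast; simp
      rw [this, abs_of_nonneg hx0]; simpa using hx1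
  | succ n ih =>
      have h1 : bin x (n+1+1) = bin x (n+1) * ((x - (n+1)) / (n+2)) := by
        rw [bin_succ]; push_cast; ring_nf
      have h2 : |(x - ((n:ℝ)+1)) / ((n:ℝ)+2)| ≤ ((n:ℝ)+1)/((n:ℝ)+2) := by
        rw [abs_div, abs_of_pos (by positivity : (0:ℝ) < (n:ℝ)+2)]
        apply div_le_div_of_nonneg_right ?_ (by positivity)
        · rw [abs_sub_comm, abs_of_nonneg (by linarith)]
          linarith
      calc |bin x (n+1+1)| = |bin x (n+1)| * |(x - ((n:ℝ)+1)) / ((n:ℝ)+2)| := by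
            rw [h1, abs_mul]
        _ ≤ (1/((n:ℝ)+1)) * (((n:ℝ)+1)/((n:ℝ)+2)) := by
            apply mul_le_mul ih h2 (abs_nonneg _) (by positivity)
        _ ≤ 1/((n:ℕ)+1+1 : ℝ) := by
            push_cast
            rw [div_mul_div_comm, one_mul, div_le_div_iff₀ (by positivity) (by positivity)]
            nlinarith [Nat.cast_nonneg (α := ℝ) n]
        _ = 1/(((n+1):ℕ)+1 : ℝ) := by push_cast; ring
  
lemma bin_abs_le_one {x : ℝ} (hx : x ∈ Set.Icc (0:ℝ) 1) (n : ℕ) : |bin x n| ≤ 1 := by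
  cases n with
  | zero => simp [bin_zero]
  | succ n =>
      refine (bin_abs_le hx n).trans ?_
      rw [div_le_one (by positivity)]
      simp [le_add_of_nonneg_left]

lemma bin_continuous (n : ℕ) : Continuous fun x : ℝ => bin x n := by
  unfold bin
  fun_prop

lemma binomial_summable {x : ℝ} (hx : x ∈ Set.Icc (0:ℝ) 1) {z : ℝ} (hz : |z| < 1) :
    Summable fun n => bin x n * z ^ n := by
  apply Summable.of_norm_bounded (summable_geometric_of_lt_one (abs_nonneg z) hz)
  intro n
  rw [Real.norm_eq_abs, abs_mul, abs_pow]
  calc |bin x n| * |z|^n ≤ 1 * |z|^n :=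
        mul_le_mul_of_nonneg_right (bin_abs_le_one hx n) (by positivity)
    _ = |z|^n := one_mul _

lemma binomial_hasSum {x : ℝ} (hx : x ∈ Set.Icc (0:ℝ) 1) {z : ℝ} (hz : |z| < 1) :
    HasSum (fun n => bin x n * z ^ n) (Real.exp (x * Real.log (1 + z))) := by
  set r : ℝ := (1 + |z|)/2 with hr
  have hr0 : 0 < r := by positivity
  have hr1 : r < 1 := by rw [hr]; linarith
  set t : Set ℝ := Metric.ball (0:ℝ) r with ht
  have hmem : ∀ w ∈ t, |w| < r := by
    intro w hw; simpa [ht, Real.dist_eq] using hw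
  have hzr : |z| < r := by rw [hr]; linarith
  have hzt : z ∈ t := by rw [ht]; exact Metric.mem_ball.2 (by simpa [Real.dist_eq] using hzr)
  have h0t : (0:ℝ) ∈ t := by rw [ht]; exact Metric.mem_ball_self hr0
  -- summable bound for derivatives
  have hu : Summable (fun n : ℕ => (n:ℝ) * r^(n-1)) := by
    rw [← summable_nat_add_iff 1]
    have h1 : Summable (fun n : ℕ => (n:ℝ) * r^n + r^n) := by
      apply Summable.add
      · simpa using summable_pow_mul_geometric_of_norm_lt_one 1
          (by rwa [Real.norm_eq_abs, abs_of_pos hr0])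
      · exact summable_geometric_of_lt_one hr0.le hr1
    apply h1.congr
    intro n
    push_cast [Nat.add_sub_cancel]
    ring
  have hbound : ∀ (n : ℕ), ∀ w ∈ t, ‖bin x n * ((n:ℝ) * w^(n-1))‖ ≤ (n:ℝ) * r^(n-1) := by
    intro n w hw
    rw [Real.norm_eq_abs, abs_mul, abs_mul, abs_pow]
    calc |bin x n| * (|(n:ℝ)| * |w|^(n-1)) ≤ 1 * (|(n:ℝ)| * r^(n-1)) := by
          apply mul_le_mul (bin_abs_le_one hx n) ?_ (by positivity) one_pos.le
          exact mul_le_mul_of_nonneg_left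
            (pow_le_pow_left₀ (abs_nonneg w) (hmem w hw).le _) (abs_nonneg _)
      _ = (n:ℝ) * r^(n-1) := by rw [one_mul, Nat.abs_cast]
  set S : ℝ → ℝ := fun w => ∑' n, bin x n * w ^ n with hS
  have hderiv : ∀ w ∈ t, HasDerivAt S (∑' n, bin x n * ((n:ℝ) * w^(n-1))) w := by
    intro w hw
    exact hasDerivAt_tsum_of_isPreconnected hu Metric.isOpen_ball
      (convex_ball (0:ℝ) r).isPreconnected
      (fun n y _ => (hasDerivAt_pow n y).const_mul (bin x n))
      (fun n y hy => hbound n y hy) h0t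
      (binomial_summable hx (z := 0) (by simp)) hw
  have hDsum : ∀ w ∈ t, Summable (fun n => bin x n * ((n:ℝ) * w^(n-1))) := fun w hw =>
    Summable.of_norm_bounded hu (fun n => hbound n w hw)
  have key : ∀ w ∈ t, (1+w) * (∑' n, bin x n * ((n:ℝ) * w^(n-1))) = x * S w := by
    intro w hw
    set D := ∑' n, bin x n * ((n:ℝ) * w^(n-1)) with hD
    have hw1 : |w| < 1 := (hmem w hw).trans hr1
    have hsg : HasSum (fun n => bin x n * w^n) (S w) := (binomial_summable hx hw1).hasSum
    have h0 : HasSum (fun n => bin x n * ((n:ℝ) * w^(n-1))) D := (hDsum w hw).hasSum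
    have h1 : HasSum (fun n => bin x n * (x - (n:ℝ)) * w^n) D := by
      have h1a := (hasSum_nat_add_iff
        (f := fun n => bin x n * ((n:ℝ) * w^(n-1))) 1).2 (by simpa using h0)
      have e : (fun n : ℕ => bin x (n+1) * ((((n+1):ℕ):ℝ) * w^(n+1-1)))
          = fun n : ℕ => bin x n * (x - (n:ℝ)) * w^n := by
        funext n
        rw [Nat.add_sub_cancel, bin_succ]
        have hne : ((n:ℝ)+1) ≠ 0 := by positivity
        push_cast
        field_simp
      rwa [e] at h1a
    have h2 : HasSum (fun n : ℕ => (n:ℝ) * (bin x n * w^n)) (x * S w - D) := by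
      have h2a := (hsg.mul_left x).sub h1
      have e2 : (fun n : ℕ => x * (bin x n * w^n) - bin x n * (x - (n:ℝ)) * w^n)
          = fun n : ℕ => (n:ℝ) * (bin x n * w^n) := funext fun n => by ring
      rwa [e2] at h2a
    have h3 : HasSum (fun n : ℕ => (n:ℝ) * (bin x n * w^n)) (w * D) := by
      have h3a := h0.mul_left w
      have e3 : (fun n : ℕ => w * (bin x n * ((n:ℝ) * w^(n-1))))
          = fun n : ℕ => (n:ℝ) * (bin x n * w^n) := by
        funext n
        cases n with
        | zero => simp
        | succ m => rw [Nat.add_sub_cancel]; push_cast; ring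
      rwa [e3] at h3a
    have hwd : x * S w - D = w * D := h2.unique h3
    linarith
  have hφ : ∀ w ∈ t, HasDerivAt (fun w => S w * Real.exp (-(x * Real.log (1+w)))) 0 w := by
    intro w hw
    have h1w : (0:ℝ) < 1 + w := by
      have h := abs_lt.1 ((hmem w hw).trans hr1); linarith [h.1]
    have hlog : HasDerivAt (fun w : ℝ => Real.log (1+w)) (1/(1+w)) w := by
      have h := (Real.hasDerivAt_log h1w.ne').comp w ((hasDerivAt_id w).const_add 1)
      simpa [one_div, Function.comp_def] using h
    have hE : HasDerivAt (fun w : ℝ => Real.exp (-(x * Real.log (1+w))))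
        (Real.exp (-(x * Real.log (1+w))) * (-(x * (1/(1+w))))) w := ((hlog.const_mul x).neg).exp
    have hSd := hderiv w hw
    have hmul := hSd.mul hE
    have hzero : (∑' n, bin x n * ((n:ℝ) * w^(n-1))) * Real.exp (-(x * Real.log (1+w)))
        + S w * (Real.exp (-(x * Real.log (1+w))) * (-(x * (1/(1+w))))) = 0 := by
      have hk := key w hw
      have hD : (∑' n, bin x n * ((n:ℝ) * w^(n-1))) = x * S w / (1+w) := by
        rw [← hk, mul_div_cancel_left₀ _ h1w.ne']
      rw [hD]; ring
    rwa [hzero] at hmul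
  have hconst := (convex_ball (0:ℝ) r).is_const_of_fderivWithin_eq_zero
      (f := fun w => S w * Real.exp (-(x * Real.log (1+w))))
      (fun w hw => ((hφ w hw).differentiableAt).differentiableWithinAt)
      (fun w hw => by
        rw [fderivWithin_of_isOpen Metric.isOpen_ball hw, (hφ w hw).hasFDerivAt.fderiv]
        exact ContinuousLinearMap.ext fun y => by simp) hzt h0t
  have hS0 : S 0 = 1 := by
    have hrfl : S 0 = ∑' n : ℕ, bin x n * (0:ℝ)^n := rfl
    rw [hrfl, tsum_eq_single 0 (fun n hn => by simp [zero_pow hn])]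
    simp [bin_zero]
  have hfin : S z * Real.exp (-(x * Real.log (1+z))) = 1 := by
    simpa [hS0, Real.log_one] using hconst
  have hSz : S z = Real.exp (x * Real.log (1+z)) := by
    rwa [Real.exp_neg, mul_inv_eq_one₀ (Real.exp_ne_zero _)] at hfin
  have hfin2 := (binomial_summable hx hz).hasSum
  rwa [show (∑' n, bin x n * z^n) = S z from rfl, hSz] at hfin2

noncomputable def gc (n : ℕ) : ℝ := ∫ x in Set.Ioc (0:ℝ) 1, bin x n

noncomputable def fG : ℝ → ℝ := fun z => if z = 0 then 1 else z / Real.log (1+z)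

lemma bin_integrable (n : ℕ) : IntegrableOn (fun x => bin x n) (Set.Ioc (0:ℝ) 1) volume :=
  (bin_continuous n).integrableOn_Ioc

lemma gc_zero : gc 0 = 1 := by
  unfold gc
  rw [show (fun x => bin x 0) = fun _ : ℝ => (1:ℝ) from funext fun x => bin_zero x]
  simp

lemma gc_abs_le_one (n : ℕ) : |gc n| ≤ 1 := by
  have h := norm_setIntegral_le_of_norm_le_const (μ := volume) (f := fun x => bin x n)
    (C := 1) (s := Set.Ioc (0:ℝ) 1) (by simp)
    (fun x hx => bin_abs_le_one ⟨hx.1.le, hx.2⟩ n)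
  simpa [Real.volume_Ioc, Measure.real, gc] using h

lemma gc_abs_le (n : ℕ) : |gc (n+1)| ≤ 1/(n+1) := by
  have h := norm_setIntegral_le_of_norm_le_const (μ := volume) (f := fun x => bin x (n+1))
    (C := 1/(n+1)) (s := Set.Ioc (0:ℝ) 1) (by simp)
    (fun x hx => bin_abs_le ⟨hx.1.le, hx.2⟩ n)
  simpa [Real.volume_Ioc, Measure.real, gc] using h

lemma int_exp {a : ℝ} (ha : a ≠ 0) :
    ∫ x in Set.Ioc (0:ℝ) 1, Real.exp (x * a) = (Real.exp a - 1)/a := by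
  rw [← intervalIntegral.integral_of_le zero_le_one]
  have h : ∀ x ∈ Set.uIcc (0:ℝ) 1, HasDerivAt (fun y => Real.exp (y * a) / a)
      (Real.exp (x * a)) x := by
    intro x _
    have h1 := ((hasDerivAt_mul_const (x := x) a)).exp
    have h2 := h1.div_const a
    simpa [mul_div_assoc, mul_div_cancel_right₀ _ ha] using h2
  rw [intervalIntegral.integral_eq_sub_of_hasDerivAt h
    (Continuous.intervalIntegrable (by continuity) _ _)]
  simp only [one_mul, zero_mul, Real.exp_zero]
  ring

lemma gc_hasSum {z : ℝ} (hz : |z| < 1) :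
    HasSum (fun n => gc n * z^n) (fG z) := by
  rcases eq_or_ne z 0 with rfl | hz0
  · have h := hasSum_single (f := fun n => gc n * (0:ℝ)^n) 0
      (fun b hb => by simp [zero_pow hb])
    simpa [gc_zero, fG] using h
  · have h1z : (0:ℝ) < 1 + z := by have := abs_lt.1 hz; linarith [this.1]
    have hlog : Real.log (1+z) ≠ 0 :=
      Real.log_ne_zero_of_pos_of_ne_one h1z (by intro h; apply hz0; linarith)
    have hmain := hasSum_integral_of_summable_integral_norm
      (μ := volume.restrict (Set.Ioc (0:ℝ) 1))
      (F := fun n x => bin x n * z^n) (fun n => (bin_integrable n).mul_const _) ?_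
    · have e1 : (fun n => ∫ x in Set.Ioc (0:ℝ) 1, bin x n * z^n) = fun n => gc n * z^n :=
        funext fun n => by rw [MeasureTheory.integral_mul_const]; rfl
      have e2 : (∫ x in Set.Ioc (0:ℝ) 1, ∑' n, bin x n * z^n) = fG z := by
        rw [setIntegral_congr_fun measurableSet_Ioc
          (fun x hx => (binomial_hasSum (Set.mem_Icc.2 ⟨hx.1.le, hx.2⟩) hz).tsum_eq)]
        rw [int_exp hlog, Real.exp_log h1z, fG, if_neg hz0]
        ring_nf
      rw [e1, e2] at hmain
      exact hmain
    · apply Summable.of_nonneg_of_le (fun n => integral_nonneg (fun x => norm_nonneg _))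
        (fun n => ?_) (summable_geometric_of_lt_one (abs_nonneg z) hz)
      calc (∫ x in Set.Ioc (0:ℝ) 1, ‖bin x n * z^n‖)
          ≤ ∫ _x in Set.Ioc (0:ℝ) 1, |z|^n := by
            apply integral_mono_of_nonneg (Filter.Eventually.of_forall fun x => norm_nonneg _)
              (integrable_const _)
            apply (ae_restrict_iff' measurableSet_Ioc).mpr
            apply Filter.Eventually.of_forall
            intro x hx
            show ‖bin x n * z^n‖ ≤ |z|^n
            rw [Real.norm_eq_abs, abs_mul, abs_pow]
            calc |bin x n| * |z|^n ≤ 1 * |z|^n :=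
                  mul_le_mul_of_nonneg_right (bin_abs_le_one ⟨hx.1.le, hx.2⟩ n) (by positivity)
              _ = |z|^n := one_mul _
        _ = |z|^n := by simp [Real.volume_Ioc]

lemma hasFPSB (a : ℕ → ℝ) (f : ℝ → ℝ)
    (h : ∀ z : ℝ, |z| < 1 → HasSum (fun n => a n * z^n) (f z)) :
    HasFPowerSeriesOnBall f (FormalMultilinearSeries.ofScalars ℝ a) 0 (1/2) := by
  have hb : ∀ y : ℝ, y ∈ Metric.eball (0:ℝ) (1/2) → |y| < 1 := by
    intro y hy
    rw [mem_emetric_ball_zero_iff] at hy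
    have h2 : ((‖y‖₊ : ℝ≥0∞)) < 1 := hy.trans (by norm_num)
    rw [← ENNReal.coe_one, ENNReal.coe_lt_coe] at h2
    have h3 := NNReal.coe_lt_coe.2 h2
    simpa using h3
  constructor
  · have key : ((2⁻¹ : ℝ≥0) : ℝ≥0∞) ≤ (FormalMultilinearSeries.ofScalars ℝ a).radius := by
      apply FormalMultilinearSeries.le_radius_of_tendsto (l := 0)
      have hs : Summable (fun n => a n * (2⁻¹:ℝ)^n) :=
        (h _ (by rw [abs_of_pos] <;> norm_num)).summable
      have ht := hs.tendsto_atTop_zero.abs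
      have e : (fun n => ‖(FormalMultilinearSeries.ofScalars ℝ a) n‖ * ((2⁻¹:ℝ≥0):ℝ)^n)
          = fun n => |a n * (2⁻¹:ℝ)^n| := by
        funext n
        rw [FormalMultilinearSeries.ofScalars_norm, abs_mul, abs_pow,
          abs_of_pos (by norm_num : (0:ℝ) < 2⁻¹), Real.norm_eq_abs]
        norm_num
      rw [e]
      simpa using ht
    calc (1/2 : ℝ≥0∞) = ((2⁻¹ : ℝ≥0) : ℝ≥0∞) := by norm_num
      _ ≤ _ := key
  · norm_num
  · intro y hy
    rw [zero_add]
    have e : (fun n => (FormalMultilinearSeries.ofScalars ℝ a) n fun _ => y)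
        = fun n => a n * y^n := by
      funext n
      rw [FormalMultilinearSeries.ofScalars_apply_eq, smul_eq_mul]
    rw [e]
    exact h y (hb y hy)

lemma coeff_unique (a b : ℕ → ℝ) (f : ℝ → ℝ)
    (ha : ∀ z : ℝ, |z| < 1 → HasSum (fun n => a n * z^n) (f z))
    (hb : ∀ z : ℝ, |z| < 1 → HasSum (fun n => b n * z^n) (f z)) : a = b := by
  have h1 := (hasFPSB a f ha).hasFPowerSeriesAt
  have h2 := (hasFPSB b f hb).hasFPowerSeriesAt
  exact FormalMultilinearSeries.ofScalars_series_injective ℝ ℝ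
    (h1.eq_formalMultilinearSeries h2)

section
variable {G : ℕ → ℝ}
  (hG : ∀ z : ℝ, |z| < 1 → z ≠ 0 →
      z / Real.log (1 + z) = 1 + ∑' n : ℕ, G (n + 1) * z ^ (n + 1))

include hG

lemma forced_summable {z : ℝ} (hz : |z| < 1) :
    Summable (fun n => G (n+1) * z^(n+1)) := by
  rcases eq_or_ne z 0 with rfl | hz0
  · rw [show (fun n:ℕ => G (n+1) * (0:ℝ)^(n+1)) = fun _ => 0 from funext fun n => by simp]
    exact summable_zero
  · by_contra h
    have h1z : (0:ℝ) < 1 + z := by have := abs_lt.1 hz; linarith [this.1]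
    have hGz := hG z hz hz0
    rw [tsum_eq_zero_of_not_summable h, add_zero] at hGz
    have hlt : Real.log (1+z) < z := by
      have h1 := Real.add_one_lt_exp hz0
      have h2 := Real.log_lt_log h1z (by linarith)
      rwa [Real.log_exp] at h2
    rcases eq_or_ne (Real.log (1+z)) 0 with hL | hL
    · rw [hL, div_zero] at hGz; norm_num at hGz
    · rw [div_eq_one_iff_eq hL] at hGz
      rw [← hGz] at hlt
      exact lt_irrefl _ hlt

lemma G_hasSum {z : ℝ} (hz : |z| < 1) :
    HasSum (fun n => (if n = 0 then 1 else G n) * z^n) (fG z) := by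
  rcases eq_or_ne z 0 with rfl | hz0
  · have h := hasSum_single (f := fun n => (if n = 0 then 1 else G n) * (0:ℝ)^n) 0
      (fun b hb => by simp [zero_pow hb])
    simpa [fG] using h
  · have hs := (forced_summable hG hz).hasSum
    have hGz := hG z hz hz0
    have hfz : fG z = z / Real.log (1+z) := if_neg hz0
    have h1 : HasSum (fun n => (if n+1 = 0 then (1:ℝ) else G (n+1)) * z^(n+1)) (fG z - 1) := by
      have e : (fun n : ℕ => (if n+1 = 0 then (1:ℝ) else G (n+1)) * z^(n+1))
          = fun n => G (n+1) * z^(n+1) := by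
        funext n; rw [if_neg (Nat.succ_ne_zero n)]
      rw [e]
      have : fG z - 1 = ∑' n : ℕ, G (n + 1) * z ^ (n + 1) := by
        rw [hfz, hGz]; ring
      rw [this]
      exact hs
    have h2 := (hasSum_nat_add_iff (f := fun n => (if n = 0 then (1:ℝ) else G n) * z^n) 1).1 h1
    simpa using h2
end

noncomputable def psi (s : ℝ) : ℝ :=
  ∫ u in Set.Ioo (0:ℝ) 1, (Real.exp (s * Real.log u) - 1)/Real.log u

lemma F_meas (s : ℝ) :
    AEStronglyMeasurable (fun u => (Real.exp (s * Real.log u) - 1)/Real.log u)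
      (volume.restrict (Set.Ioo (0:ℝ) 1)) :=
  (((Real.measurable_exp.comp (measurable_const.mul Real.measurable_log)).sub
    measurable_const).div Real.measurable_log).aestronglyMeasurable

lemma F_bound {s : ℝ} (hs : 0 ≤ s) {u : ℝ} (hu : u ∈ Set.Ioo (0:ℝ) 1) :
    |(Real.exp (s * Real.log u) - 1)/Real.log u| ≤ s := by
  obtain ⟨hu0, hu1⟩ := hu
  have hL : Real.log u < 0 := Real.log_neg hu0 hu1
  have h1 : Real.exp (s * Real.log u) ≤ 1 := by
    rw [← Real.exp_zero]
    exact Real.exp_le_exp.2 (mul_nonpos_of_nonneg_of_nonpos hs hL.le)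
  have h2 : 1 + s * Real.log u ≤ Real.exp (s * Real.log u) := by
    have := Real.add_one_le_exp (s * Real.log u); linarith
  rw [abs_div, abs_of_neg hL, abs_of_nonpos (by linarith), div_le_iff₀ (by linarith)]
  nlinarith

lemma psi_hasDeriv {s₀ : ℝ} (hs₀ : 0 ≤ s₀) : HasDerivAt psi (1/(s₀+1)) s₀ := by
  have hmain := hasDerivAt_integral_of_dominated_loc_of_deriv_le
    (μ := volume.restrict (Set.Ioo (0:ℝ) 1)) (x₀ := s₀)
    (F := fun s u => (Real.exp (s * Real.log u) - 1)/Real.log u)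
    (F' := fun s u => Real.exp (s * Real.log u))
    (bound := fun u => Real.exp ((s₀ - 2⁻¹) * Real.log u))
    (s := Metric.ball s₀ 2⁻¹) (Metric.ball_mem_nhds s₀ (by norm_num))
    (Filter.Eventually.of_forall fun s => F_meas s) ?_ ?_ ?_ ?_ ?_
  · have heq : (∫ u in Set.Ioo (0:ℝ) 1, Real.exp (s₀ * Real.log u)) = 1/(s₀+1) := by
      rw [setIntegral_congr_fun measurableSet_Ioo
        (g := fun u : ℝ => u ^ s₀)
        (fun u hu => by
          show Real.exp (s₀ * Real.log u) = u ^ s₀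
          rw [Real.rpow_def_of_pos hu.1, mul_comm])]
      rw [← MeasureTheory.integral_Ioc_eq_integral_Ioo,
        ← intervalIntegral.integral_of_le zero_le_one,
        integral_rpow (Or.inl (by linarith))]
      rw [Real.one_rpow, Real.zero_rpow (by linarith)]
      norm_num
    rw [← heq]
    exact hmain.2
  · -- integrability of F s₀
    apply Integrable.mono' (integrable_const s₀) (F_meas s₀)
    apply (ae_restrict_iff' measurableSet_Ioo).mpr
    exact Filter.Eventually.of_forall fun u hu => F_bound hs₀ hu
  · exact (Real.measurable_exp.comp
      (measurable_const.mul Real.measurable_log)).aestronglyMeasurable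
  · -- bound
    apply (ae_restrict_iff' measurableSet_Ioo).mpr
    apply Filter.Eventually.of_forall
    intro u hu s hs
    have hL : Real.log u < 0 := Real.log_neg hu.1 hu.2
    rw [Real.norm_eq_abs, abs_of_pos (Real.exp_pos _)]
    apply Real.exp_le_exp.2
    have : s₀ - 2⁻¹ ≤ s := by
      rw [Metric.mem_ball, Real.dist_eq] at hs
      have := abs_lt.1 hs; linarith [this.1]
    exact mul_le_mul_of_nonpos_right this hL.le
  · -- bound integrable
    have h1 : IntegrableOn (fun u : ℝ => u ^ (s₀ - 2⁻¹)) (Set.Ioo (0:ℝ) 1) volume := by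
      have h2 := (intervalIntegral.intervalIntegrable_rpow' (a := 0) (b := 1)
        (by linarith : (-1:ℝ) < s₀ - 2⁻¹))
      rw [intervalIntegrable_iff_integrableOn_Ioc_of_le zero_le_one] at h2
      exact h2.mono_set Set.Ioo_subset_Ioc_self
    apply h1.congr_fun ?_ measurableSet_Ioo
    intro u hu
    show u ^ (s₀ - 2⁻¹) = Real.exp ((s₀ - 2⁻¹) * Real.log u)
    rw [Real.rpow_def_of_pos hu.1, mul_comm]
  · -- differentiability
    apply (ae_restrict_iff' measurableSet_Ioo).mpr
    apply Filter.Eventually.of_forall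
    intro u hu s _
    have hL : Real.log u ≠ 0 :=
      Real.log_ne_zero_of_pos_of_ne_one hu.1 hu.2.ne
    have h := (((hasDerivAt_mul_const (x := s) (Real.log u)).exp).sub_const 1).div_const
      (Real.log u)
    simpa [mul_div_assoc, mul_div_cancel_right₀ _ hL] using h

lemma psi_zero : psi 0 = 0 := by
  unfold psi
  rw [setIntegral_congr_fun measurableSet_Ioo (g := fun _ : ℝ => (0:ℝ))
    (fun u hu => by simp)]
  simp

lemma frullani (m : ℕ) :
    ∫ u in Set.Ioo (0:ℝ) 1, (u^m - 1)/Real.log u = Real.log ((m:ℝ)+1) := by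
  have hm0 : (0:ℝ) ≤ (m:ℝ) := Nat.cast_nonneg m
  have hftc := intervalIntegral.integral_eq_sub_of_hasDerivAt (f := psi)
    (f' := fun s => 1/(s+1)) (a := 0) (b := (m:ℝ)) ?_ ?_
  · have hval : ∫ s in (0:ℝ)..(m:ℝ), 1/(s+1) = Real.log ((m:ℝ)+1) := by
      have h := intervalIntegral.integral_comp_add_right (a := (0:ℝ)) (b := (m:ℝ))
        (fun u => 1/u) 1
      rw [h, zero_add, integral_one_div (by
        intro hc
        rw [Set.uIcc_of_le (by linarith)] at hc
        have := hc.1; linarith)]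
      norm_num
    rw [hval, psi_zero, sub_zero] at hftc
    rw [hftc]
    unfold psi
    apply setIntegral_congr_fun measurableSet_Ioo
    intro u hu
    show (u ^ m - 1) / Real.log u = (Real.exp ((m:ℝ) * Real.log u) - 1) / Real.log u
    rw [Real.exp_nat_mul, Real.exp_log hu.1]

  · intro s hs
    rw [Set.uIcc_of_le hm0] at hs
    exact psi_hasDeriv hs.1
  · apply ContinuousOn.intervalIntegrable
    apply ContinuousOn.div continuousOn_const (by fun_prop)
    intro s hs
    rw [Set.uIcc_of_le hm0] at hs
    have := hs.1; positivity

lemma key_poly {k : ℕ} (hk : 1 ≤ k) (t : ℝ) :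
    t^k = ∑ m ∈ range (k+1), (-1:ℝ)^m * (k.choose m) * ((1-t)^m - 1) := by
  have h1 : t^k = ∑ m ∈ range (k+1), (-1:ℝ)^m * (k.choose m) * (1-t)^m := by
    have h := add_pow (-(1-t)) 1 k
    have e : -(1-t) + 1 = t := by ring
    rw [e] at h
    rw [h]
    apply Finset.sum_congr rfl
    intro m _
    rw [neg_pow]
    ring
  have h2 : (0:ℝ) = ∑ m ∈ range (k+1), (-1:ℝ)^m * (k.choose m) := by
    have h := add_pow (-1:ℝ) 1 k
    have e : (-1:ℝ) + 1 = 0 := by ring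
    rw [e, zero_pow (by omega : k ≠ 0)] at h
    rw [h]
    apply Finset.sum_congr rfl
    intro m _
    ring
  calc t^k = t^k - 0 := by ring
    _ = ∑ m ∈ range (k+1), ((-1:ℝ)^m * (k.choose m) * (1-t)^m - (-1:ℝ)^m * (k.choose m)) := by
        rw [Finset.sum_sub_distrib, ← h1, ← h2]
    _ = _ := Finset.sum_congr rfl fun m _ => by ring

lemma bin_abs_eq {x : ℝ} (hx : x ∈ Set.Icc (0:ℝ) 1) (n : ℕ) :
    |bin x (n+1)| = (-1:ℝ)^n * bin x (n+1) := by
  have hsign := bin_sign hx n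
  rcases Nat.even_or_odd n with he | ho
  · rw [he.neg_one_pow] at hsign ⊢
    rw [one_mul] at hsign ⊢
    exact abs_of_nonneg hsign
  · rw [ho.neg_one_pow] at hsign ⊢
    rw [neg_one_mul] at hsign ⊢
    exact abs_of_nonpos (by linarith)

lemma gc_abs (n : ℕ) : |gc (n+1)| = ∫ x in Set.Ioc (0:ℝ) 1, |bin x (n+1)| := by
  have h : (-1:ℝ)^n * gc (n+1) = ∫ x in Set.Ioc (0:ℝ) 1, |bin x (n+1)| := by
    unfold gc
    rw [← integral_const_mul]
    apply setIntegral_congr_fun measurableSet_Ioc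
    intro x hx
    exact (bin_abs_eq ⟨hx.1.le, hx.2⟩ n).symm
  have hnn : 0 ≤ (-1:ℝ)^n * gc (n+1) := h ▸ integral_nonneg fun x => abs_nonneg _
  calc |gc (n+1)| = |(-1:ℝ)^n * gc (n+1)| := by
        rw [abs_mul, abs_pow, abs_neg, abs_one, one_pow, one_mul]
    _ = (-1:ℝ)^n * gc (n+1) := abs_of_nonneg hnn
    _ = _ := h

lemma sq_summable : Summable (fun n : ℕ => 1/((n:ℝ)+1)^2) := by
  have h := (Real.summable_one_div_nat_pow (p := 2)).2 (by norm_num)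
  have h2 := (summable_nat_add_iff 1).2 h
  apply h2.congr
  intro n
  push_cast
  ring

lemma int_norm_le {s : Set ℝ} (hs1 : MeasurableSet s) (hs : volume s = 1) {f : ℝ → ℝ} {C : ℝ}
    (hm : AEStronglyMeasurable f (volume.restrict s)) (h : ∀ x ∈ s, ‖f x‖ ≤ C) :
    (∫ x in s, ‖f x‖) ≤ C := by
  have hb := norm_setIntegral_le_of_norm_le_const (μ := volume) (s := s) (C := C)
    (f := fun x => ‖f x‖) (by rw [hs]; exact ENNReal.one_lt_top)
    (fun x hx => by rw [norm_norm]; exact h x hx)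
  calc (∫ x in s, ‖f x‖) ≤ ‖∫ x in s, ‖f x‖‖ := le_abs_self _
    _ ≤ C := by simpa [hs, Measure.real] using hb

lemma int_pow_Ioo (j : ℕ) :
    ∫ t in Set.Ioo (0:ℝ) 1, t^j = 1/((j:ℝ)+1) := by
  rw [← MeasureTheory.integral_Ioc_eq_integral_Ioo,
    ← intervalIntegral.integral_of_le zero_le_one, integral_pow]
  push_cast
  norm_num


lemma step2 {k : ℕ} (hk : 1 ≤ k) {x : ℝ} (hx : x ∈ Set.Ioc (0:ℝ) 1) :
    ∑' n : ℕ, |bin x (n+1)|/((n:ℝ)+1+k)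
      = ∫ t in Set.Ioo (0:ℝ) 1, (1 - Real.exp (x * Real.log (1-t))) * t^(k-1) := by
  have hxI : x ∈ Set.Icc (0:ℝ) 1 := ⟨hx.1.le, hx.2⟩
  have hFint : ∀ n : ℕ, IntegrableOn (fun t : ℝ => |bin x (n+1)| * t^(n+k))
      (Set.Ioo (0:ℝ) 1) volume :=
    fun n => ((continuous_const.mul (continuous_pow (n+k))).integrableOn_Ioc).mono_set
      Set.Ioo_subset_Ioc_self
  have hFeval : ∀ n : ℕ, (∫ t in Set.Ioo (0:ℝ) 1, |bin x (n+1)| * t^(n+k))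
      = |bin x (n+1)|/((n:ℝ)+1+k) := by
    intro n
    rw [integral_const_mul, int_pow_Ioo, mul_one_div]
    congr 1
    push_cast
    ring
  have hmain := hasSum_integral_of_summable_integral_norm
    (μ := volume.restrict (Set.Ioo (0:ℝ) 1))
    (F := fun (n:ℕ) (t:ℝ) => |bin x (n+1)| * t^(n+k)) hFint ?_
  · have e1 : (fun n : ℕ => ∫ t in Set.Ioo (0:ℝ) 1, |bin x (n+1)| * t^(n+k))
        = fun n : ℕ => |bin x (n+1)|/((n:ℝ)+1+k) := funext hFeval
    rw [e1] at hmain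
    rw [hmain.tsum_eq]
    apply setIntegral_congr_fun measurableSet_Ioo
    intro t ht
    show ∑' n:ℕ, |bin x (n+1)| * t^(n+k) = (1 - Real.exp (x * Real.log (1-t))) * t^(k-1)
    have hzt : |(-t)| < 1 := by rw [abs_neg, abs_of_pos ht.1]; exact ht.2
    have hb := binomial_hasSum hxI hzt
    rw [show (1:ℝ) + -t = 1 - t by ring] at hb
    have hshift : HasSum (fun n : ℕ => bin x (n+1) * (-t)^(n+1))
        (Real.exp (x * Real.log (1-t)) - 1) := by
      apply (hasSum_nat_add_iff (f := fun n => bin x n * (-t)^n) 1).2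
      simpa [bin_zero] using hb
    have hmulk := hshift.neg.mul_right (t^(k-1))
    have e : (fun n:ℕ => -(bin x (n+1) * (-t)^(n+1)) * t^(k-1))
        = fun n:ℕ => |bin x (n+1)| * t^(n+k) := by
      funext n
      rw [bin_abs_eq hxI n, show n + k = (n+1) + (k-1) by omega, pow_add, neg_pow t]
      ring
    rw [e] at hmulk
    rw [hmulk.tsum_eq, neg_sub]
  · apply Summable.of_nonneg_of_le (fun n => integral_nonneg (fun t => norm_nonneg _))
      (fun n => ?_) sq_summable
    have he : (∫ t in Set.Ioo (0:ℝ) 1, ‖|bin x (n+1)| * t^(n+k)‖)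
        = |bin x (n+1)|/((n:ℝ)+1+k) := by
      rw [← hFeval n]
      apply setIntegral_congr_fun measurableSet_Ioo
      intro t ht
      show ‖|bin x (n+1)| * t^(n+k)‖ = |bin x (n+1)| * t^(n+k)
      rw [Real.norm_eq_abs, abs_of_nonneg (mul_nonneg (abs_nonneg _) (pow_nonneg ht.1.le _))]
    rw [he]
    have h1 : |bin x (n+1)| ≤ 1/((n:ℝ)+1) := by
      have := bin_abs_le hxI n; push_cast at this ⊢; linarith
    have h2 : ((n:ℝ)+1) ≤ ((n:ℝ)+1+k) := by
      have : (0:ℝ) ≤ k := Nat.cast_nonneg k; linarith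
    calc |bin x (n+1)|/((n:ℝ)+1+k) ≤ (1/((n:ℝ)+1))/((n:ℝ)+1) := by
          apply div_le_div₀ (by positivity) h1 (by positivity) h2
      _ = 1/((n:ℝ)+1)^2 := by
          rw [div_div]
          congr 1
          ring



lemma main_integrals {k : ℕ} (hk : 1 ≤ k) :
    (∫ x in Set.Ioc (0:ℝ) 1, ∫ t in Set.Ioo (0:ℝ) 1,
        (1 - Real.exp (x * Real.log (1-t))) * t^(k-1))
    = 1/(k:ℝ) + ∑ m ∈ range (k+1), (-1:ℝ)^m * (k.choose m) * Real.log ((m:ℝ)+1) := by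
  have hL : ∀ t ∈ Set.Ioo (0:ℝ) 1, Real.log (1-t) < 0 := fun t ht =>
    Real.log_neg (by linarith [ht.2]) (by linarith [ht.1])
  have hswap : (∫ x in Set.Ioc (0:ℝ) 1, ∫ t in Set.Ioo (0:ℝ) 1,
      (1 - Real.exp (x * Real.log (1-t))) * t^(k-1))
      = ∫ t in Set.Ioo (0:ℝ) 1, ∫ x in Set.Ioc (0:ℝ) 1,
      (1 - Real.exp (x * Real.log (1-t))) * t^(k-1) := by
    apply MeasureTheory.integral_integral_swap
    have hmeas : Measurable (fun p : ℝ × ℝ =>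
        (1 - Real.exp (p.1 * Real.log (1-p.2))) * p.2^(k-1)) := by
      apply Measurable.mul
      · exact Measurable.sub measurable_const
          (measurable_fst.mul (Real.measurable_log.comp
            (measurable_const.sub measurable_snd))).exp
      · exact measurable_snd.pow_const (k-1)
    apply Integrable.mono' (g := fun _ => (1:ℝ)) (integrable_const 1)
      hmeas.aestronglyMeasurable
    rw [MeasureTheory.Measure.prod_restrict]
    apply (ae_restrict_iff' (measurableSet_Ioc.prod measurableSet_Ioo)).mpr
    apply Filter.Eventually.of_forall
    rintro ⟨x, t⟩ ⟨hx, ht⟩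
    have hE0 : 0 < Real.exp (x * Real.log (1-t)) := Real.exp_pos _
    have hE1 : Real.exp (x * Real.log (1-t)) ≤ 1 := by
      have h := Real.exp_le_exp.2 (mul_nonpos_of_nonneg_of_nonpos hx.1.le (hL t ht).le)
      simpa using h
    have ht1 : t^(k-1) ≤ 1 := pow_le_one₀ ht.1.le ht.2.le
    have ht0 : (0:ℝ) ≤ t^(k-1) := pow_nonneg ht.1.le _
    show ‖(1 - Real.exp (x * Real.log (1-t))) * t^(k-1)‖ ≤ 1
    rw [Real.norm_eq_abs, abs_mul, abs_of_nonneg (by linarith), abs_of_nonneg ht0]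
    nlinarith
  have hinner : ∀ t ∈ Set.Ioo (0:ℝ) 1,
      (∫ x in Set.Ioc (0:ℝ) 1, (1 - Real.exp (x * Real.log (1-t))) * t^(k-1))
      = t^(k-1) + t^k / Real.log (1-t) := by
    intro t ht
    have hLne : Real.log (1-t) ≠ 0 := (hL t ht).ne
    rw [integral_mul_const]
    have hsplit : (∫ x in Set.Ioc (0:ℝ) 1, (1 - Real.exp (x * Real.log (1-t))))
        = 1 - (Real.exp (Real.log (1-t)) - 1)/Real.log (1-t) := by
      rw [integral_sub (integrable_const 1)]
      · rw [setIntegral_const, int_exp hLne]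
        simp [Real.volume_Ioc]
      · exact (Real.continuous_exp.comp (continuous_id.mul continuous_const)).integrableOn_Ioc
    rw [hsplit, Real.exp_log (by linarith [ht.2] : (0:ℝ) < 1 - t)]
    have hpowk : t^(k-1) * t = t^k := by
      rw [← pow_succ]
      congr 1
      omega
    rw [← hpowk]
    field_simp
    ring
  have hint1 : IntegrableOn (fun t : ℝ => t^(k-1)) (Set.Ioo (0:ℝ) 1) volume :=
    (continuous_pow _).integrableOn_Ioc.mono_set Set.Ioo_subset_Ioc_self
  have hint2 : IntegrableOn (fun t : ℝ => t^k / Real.log (1-t)) (Set.Ioo (0:ℝ) 1) volume := by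
    apply Integrable.mono' (integrable_const (1:ℝ))
    · exact ((measurable_id.pow_const k).div (Real.measurable_log.comp
        (measurable_const.sub measurable_id))).aestronglyMeasurable
    · apply (ae_restrict_iff' measurableSet_Ioo).mpr
      apply Filter.Eventually.of_forall
      intro t ht
      have hLt := hL t ht
      have hlog_le : Real.log (1-t) ≤ -t := by
        have := Real.log_le_sub_one_of_pos (by linarith [ht.2] : (0:ℝ) < 1-t)
        linarith
      show ‖t^k / Real.log (1-t)‖ ≤ 1
      rw [Real.norm_eq_abs, abs_div, abs_of_neg hLt, abs_of_nonneg (pow_nonneg ht.1.le _),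
        div_le_one (by linarith [ht.1])]
      calc t^k ≤ t^1 := pow_le_pow_of_le_one ht.1.le ht.2.le hk
        _ = t := pow_one t
        _ ≤ -Real.log (1-t) := by linarith
  have hintsummand : ∀ m ∈ range (k+1), IntegrableOn
      (fun t : ℝ => (-1:ℝ)^m * (k.choose m) * (((1-t)^m - 1)/Real.log (1-t)))
      (Set.Ioo (0:ℝ) 1) volume := by
    intro m _
    apply Integrable.const_mul
    apply Integrable.mono' (integrable_const ((m:ℝ)))
    · exact (((measurable_const.sub measurable_id).pow_const m).sub measurable_const).div
        (Real.measurable_log.comp (measurable_const.sub measurable_id))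
        |>.aestronglyMeasurable
    · apply (ae_restrict_iff' measurableSet_Ioo).mpr
      apply Filter.Eventually.of_forall
      intro t ht
      have hLt := hL t ht
      have hu0 : (0:ℝ) < 1 - t := by linarith [ht.2]
      have hum : (1-t)^m ≤ 1 := pow_le_one₀ hu0.le (by linarith [ht.1])
      have hexp : 1 + (m:ℝ) * Real.log (1-t) ≤ (1-t)^m := by
        have h1 := Real.add_one_le_exp ((m:ℝ) * Real.log (1-t))
        rw [Real.exp_nat_mul, Real.exp_log hu0] at h1
        linarith
      show ‖((1-t)^m - 1)/Real.log (1-t)‖ ≤ (m:ℝ)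
      rw [Real.norm_eq_abs, abs_div, abs_of_neg hLt, abs_of_nonpos (by linarith),
        div_le_iff₀ (by linarith)]
      nlinarith
  have hJ : (∫ t in Set.Ioo (0:ℝ) 1, t^k / Real.log (1-t))
      = ∑ m ∈ range (k+1), (-1:ℝ)^m * (k.choose m) * Real.log ((m:ℝ)+1) := by
    rw [setIntegral_congr_fun measurableSet_Ioo (g := fun t => ∑ m ∈ range (k+1),
        (-1:ℝ)^m * (k.choose m) * (((1-t)^m - 1)/Real.log (1-t)))
      (fun t ht => by
        show t^k / Real.log (1-t) = _
        rw [key_poly hk t, Finset.sum_div]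
        exact Finset.sum_congr rfl fun m _ => mul_div_assoc _ _ _)]
    rw [integral_finset_sum _ hintsummand]
    apply Finset.sum_congr rfl
    intro m _
    rw [integral_const_mul]
    congr 1
    rw [← MeasureTheory.integral_Ioc_eq_integral_Ioo,
      ← intervalIntegral.integral_of_le zero_le_one]
    have hsub := intervalIntegral.integral_comp_sub_left (a := (0:ℝ)) (b := 1)
      (fun u => (u^m - 1)/Real.log u) 1
    simp only [sub_zero, sub_self] at hsub
    rw [hsub, intervalIntegral.integral_of_le zero_le_one,
      MeasureTheory.integral_Ioc_eq_integral_Ioo]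
    exact frullani m
  rw [hswap, setIntegral_congr_fun measurableSet_Ioo
    (g := fun t => t^(k-1) + t^k / Real.log (1-t)) (fun t ht => hinner t ht)]
  rw [integral_add hint1 hint2, hJ, int_pow_Ioo]
  congr 2
  push_cast [Nat.cast_sub hk]
  ring

lemma step1 {G : ℕ → ℝ} (hGc : ∀ n : ℕ, G (n+1) = gc (n+1)) {k : ℕ} (hk : 1 ≤ k) :
    HasSum (fun n : ℕ => |G (n+1)|/((n:ℝ)+1+(k:ℝ)))
      (∫ x in Set.Ioc (0:ℝ) 1, ∑' n : ℕ, |bin x (n+1)|/((n:ℝ)+1+(k:ℝ))) := by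
  have hFint : ∀ n : ℕ, Integrable (fun x => |bin x (n+1)|/((n:ℝ)+1+(k:ℝ)))
      (volume.restrict (Set.Ioc (0:ℝ) 1)) :=
    fun n => ((bin_continuous (n+1)).abs.integrableOn_Ioc).div_const _
  have hmain := hasSum_integral_of_summable_integral_norm
    (μ := volume.restrict (Set.Ioc (0:ℝ) 1))
    (F := fun (n:ℕ) (x:ℝ) => |bin x (n+1)|/((n:ℝ)+1+(k:ℝ))) hFint ?_
  · have e1 : (fun n : ℕ => ∫ x in Set.Ioc (0:ℝ) 1, |bin x (n+1)|/((n:ℝ)+1+(k:ℝ)))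
        = fun n : ℕ => |G (n+1)|/((n:ℝ)+1+(k:ℝ)) := by
      funext n
      rw [integral_div, ← gc_abs, ← hGc]
    rwa [e1] at hmain
  · apply Summable.of_nonneg_of_le (fun n => integral_nonneg fun x => norm_nonneg _)
      (fun n => ?_) sq_summable
    have hb : ∀ x ∈ Set.Ioc (0:ℝ) 1,
        ‖|bin x (n+1)|/((n:ℝ)+1+(k:ℝ))‖ ≤ (1/((n:ℝ)+1))/((n:ℝ)+1) := by
      intro x hx
      have h1 := bin_abs_le (⟨hx.1.le, hx.2⟩ : x ∈ Set.Icc (0:ℝ) 1) n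
      have h2 : ((n:ℝ)+1) ≤ ((n:ℝ)+1+(k:ℝ)) := by
        have h3 : (0:ℝ) ≤ (k:ℝ) := Nat.cast_nonneg k
        linarith
      rw [Real.norm_eq_abs, abs_div, abs_abs, abs_of_pos (show (0:ℝ) < (n:ℝ)+1+(k:ℝ) by positivity)]
      apply div_le_div₀ (by positivity) ?_ (by positivity) h2
      push_cast at h1 ⊢
      linarith
    calc (∫ x in Set.Ioc (0:ℝ) 1, ‖|bin x (n+1)|/((n:ℝ)+1+(k:ℝ))‖)
        ≤ (1/((n:ℝ)+1))/((n:ℝ)+1) :=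
          int_norm_le measurableSet_Ioc (by simp [Real.volume_Ioc])
            (hFint n).aestronglyMeasurable hb
      _ = 1/((n:ℝ)+1)^2 := by rw [div_div]; congr 1; ring

theorem stmt0 (G : ℕ → ℝ)
    (hG : ∀ z : ℝ, |z| < 1 → z ≠ 0 →
      z / Real.log (1 + z) = 1 + ∑' n : ℕ, G (n + 1) * z ^ (n + 1)) :
    ∀ k : ℕ, 1 ≤ k →
      ∑' n : ℕ, |G (n + 1)| / ((n : ℝ) + 1 + k) =
        1 / (k : ℝ) + ∑ m ∈ Finset.Icc 1 k,
          (-1 : ℝ) ^ m * (k.choose m : ℝ) * Real.log ((m : ℝ) + 1) := by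
  intro k hk
  have hga := coeff_unique (fun n => if n = 0 then 1 else G n) gc fG
    (fun z hz => G_hasSum hG hz) (fun z hz => gc_hasSum hz)
  have hGc : ∀ n : ℕ, G (n+1) = gc (n+1) := by
    intro n
    have h := congrFun hga (n+1)
    simpa using h
  have h1 := step1 hGc hk
  rw [h1.tsum_eq]
  rw [setIntegral_congr_fun measurableSet_Ioc (g := fun x => ∫ t in Set.Ioo (0:ℝ) 1,
      (1 - Real.exp (x * Real.log (1-t))) * t^(k-1)) (fun x hx => step2 hk hx)]
  rw [main_integrals hk]
  congr 1
  have hins : range (k+1) = insert 0 (Finset.Icc 1 k) := by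
    ext m
    simp only [Finset.mem_range, Finset.mem_Icc, Finset.mem_insert]
    omega
  rw [hins, Finset.sum_insert (by simp)]
  norm_num
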